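/- (Subsampling Lemma) Let f : {0,1}^n → ℝ with Möbius coefficients F, i.e., f(x) = Σ_{k ≤ x} F(k) for all x. Let H ∈ {0,1}^{n×t} and ℓ ∈ {0,1}^t, and define the query vector x = ¬(H · ¬ℓ) over the Boolean semiring. Then f(x) = Σ_{k ∈ {0,1}^n : Hᵀk ≤ ℓ} F(k), where the inequality Hᵀk ≤ ℓ is componentwise and Hᵀk is computed over the Boolean semiring. -/

import Mathlib

/-- Boolean-semiring matrix-vector product: `(H·ℓ)_i = ⋁_j (H_{ij} ∧ ℓ_j)`. -/
noncomputable def bmulVec {n t : ℕ} (H : Fin n → Fin t → Bool) (l : Fin t → Bool) :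
    Fin n → Bool :=
  fun i => Finset.univ.sup fun j => H i j && l j

/-- Boolean-semiring transpose product: `(Hᵀk)_j = ⋁_i (H_{ij} ∧ k_i)`. -/
noncomputable def bvecMulT {n t : ℕ} (H : Fin n → Fin t → Bool) (k : Fin n → Bool) :
    Fin t → Bool :=
  fun j => Finset.univ.sup fun i => H i j && k i

/-- Subsampling Lemma: querying `f` at `x = ¬(H·¬ℓ)` sums the Möbius coefficients
over all `k` with `Hᵀk ≤ ℓ`. -/
theorem subsampling (n t : ℕ) (f F : (Fin n → Bool) → ℝ)
    (hF : ∀ x : Fin n → Bool,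
      f x = ∑ k ∈ Finset.univ.filter (fun k : Fin n → Bool => ∀ i, k i ≤ x i), F k)
    (H : Fin n → Fin t → Bool) (l : Fin t → Bool) :
    f (fun i => !(bmulVec H (fun j => !(l j)) i)) =
      ∑ k ∈ Finset.univ.filter (fun k : Fin n → Bool => ∀ j, bvecMulT H k j ≤ l j), F k := by
  rw [hF]
  apply Finset.sum_congr _ (fun _ _ => rfl)
  ext k
  rw [Finset.mem_filter, Finset.mem_filter]
  simp only [Finset.mem_filter, Finset.mem_univ, true_and, bmulVec, bvecMulT]
  have key : ∀ a b : Bool, a ≤ !b ↔ b ≤ !a := by decide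
  constructor
  · intro h j
    rw [Finset.sup_le_iff]
    intro i _
    have := (key _ _).mp (h i)
    rw [Finset.sup_le_iff] at this
    have := this j (Finset.mem_univ j)
    revert this
    cases H i j <;> cases k i <;> cases l j <;> decide
  · intro h i
    rw [key, Finset.sup_le_iff]
    intro j _
    have := h j
    rw [Finset.sup_le_iff] at this
    have := this i (Finset.mem_univ i)
    revert this
    cases H i j <;> cases k i <;> cases l j <;> decide
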